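/- For 1 ≤ i ≤ k and 1 ≤ j < k, the difference σ_{i,j}^{(k)} - σ_{i,j+1}^{(k)} equals (1/(2i-2)!) · ∏_{s=1-i}^{i-2} (2j - k + s), where the empty product (case i = 1) is 1. In particular, σ_{i,j}^{(k)} ≥ σ_{i,j+1}^{(k)}, with equality if and only if ⌊(k-i+3)/2⌋ ≤ j < ⌊(k+i+1)/2⌋. -/

import Mathlib

open scoped Classical in
/-- `σ_{i,j}^{(k)} = Σ (m_2-m_1)(m_3-m_2)⋯(k+1-m_i)`, the sum being over all strictly
increasing `i`-tuples `1 ≤ m_1 < ⋯ < m_i ≤ k` with `j ∈ {m_1,…,m_i}` (here tuples are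
encoded as strictly increasing `f : Fin i → Fin k`, with 1-based values `(f a).1 + 1`). -/
noncomputable def sig (k i j : ℕ) : ℕ :=
  ∑ f ∈ Finset.univ.filter (fun f : Fin i → Fin k =>
      (∀ a b : Fin i, a < b → f a < f b) ∧ ∃ a, (f a).1 + 1 = j),
    ∏ a : Fin i,
      ((if h : a.1 + 1 < i then (f ⟨a.1 + 1, h⟩).1 + 1 else k + 1) - ((f a).1 + 1))

open Finset


def Usum (a b n e1 e2 : ℕ) : ℕ :=
  ∑ p ∈ range (n+1), (a+p).choose (2*p+e1) * (b+(n-p)).choose (2*(n-p)+e2)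

def Dab (a b n : ℕ) : ℕ :=
  if b ≤ a + n then (a+n-b).choose (2*n) else (b+n-a-1).choose (2*n)

lemma hock (s r : ℕ) (h : s ≤ r) (t : ℕ) :
    ∑ m ∈ range (t+1), (m+s).choose r = (t+s+1).choose (r+1) := by
  induction t with
  | zero =>
    rw [Finset.sum_range_one]
    rcases eq_or_lt_of_le h with rfl | h
    · simp
    · rw [Nat.choose_eq_zero_of_lt (by omega), Nat.choose_eq_zero_of_lt (by omega)]
  | succ t ih =>
    rw [Finset.sum_range_succ, ih]
    have h1 := Nat.choose_succ_succ' (t+s+1) r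
    have h2 : t+1+s = t+s+1 := by ring
    rw [h2]
    omega

lemma idSum (s r : ℕ) (h : s ≤ r) (t : ℕ) :
    ∑ m ∈ range t, (m+s).choose r * (t - m) = (t+s+1).choose (r+2) := by
  induction t with
  | zero => simp [Nat.choose_eq_zero_of_lt (show s+1 < r+2 by omega)]
  | succ t ih =>
    have e1 : ∀ m ∈ range (t+1), (m+s).choose r * (t+1-m)
        = (m+s).choose r * (t-m) + (m+s).choose r := by
      intro m hm
      have hm' : m ≤ t := Nat.lt_succ_iff.mp (Finset.mem_range.mp hm)
      have : t+1-m = (t-m)+1 := by omega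
      rw [this, Nat.mul_succ]
    rw [Finset.sum_congr rfl e1, Finset.sum_add_distrib,
      Finset.sum_range_succ (f := fun m => (m+s).choose r * (t-m))]
    simp only [Nat.sub_self, Nat.mul_zero, add_zero]
    rw [ih, hock s r h t]
    have h4 := Nat.choose_succ_succ' (t+s+1) (r+1)
    rw [show r+1+1 = r+2 by ring] at h4
    rw [show t+1+s+1 = t+s+1+1 by ring]
    omega

lemma Usymm (a b n e1 e2 : ℕ) : Usum a b n e1 e2 = Usum b a n e2 e1 := by
  rw [Usum, Usum, ← Finset.sum_range_reflect]
  apply Finset.sum_congr rfl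
  intro p hp
  have hpn : p ≤ n := Nat.lt_succ_iff.mp (Finset.mem_range.mp hp)
  have h1 : n + 1 - 1 - p = n - p := by omega
  rw [h1, Nat.sub_sub_self hpn, mul_comm]

lemma Ra1 (a b n e2 : ℕ) : Usum (a+1) b n 1 e2 = Usum a b n 1 e2 + Usum a b n 0 e2 := by
  rw [Usum, Usum, Usum, ← Finset.sum_add_distrib]
  apply Finset.sum_congr rfl
  intro p _
  have h1 : a+1+p = (a+p)+1 := by ring
  rw [h1, Nat.choose_succ_succ' (a+p) (2*p), add_mul]
  ring_nf

lemma Rb1 (a b n e1 : ℕ) : Usum a (b+1) n e1 1 = Usum a b n e1 1 + Usum a b n e1 0 := by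
  rw [Usum, Usum, Usum, ← Finset.sum_add_distrib]
  apply Finset.sum_congr rfl
  intro p _
  have h1 : b+1+(n-p) = (b+(n-p))+1 := by ring
  rw [h1, Nat.choose_succ_succ' (b+(n-p)) (2*(n-p)), mul_add]
  ring_nf

lemma Ra0 (a b n e2 : ℕ) :
    Usum (a+1) b (n+1) 0 e2 = Usum a b (n+1) 0 e2 + Usum (a+1) b n 1 e2 := by
  rw [Usum, Usum, Usum, Finset.sum_range_succ', Finset.sum_range_succ'
    (f := fun p => (a+p).choose (2*p+0) * (b+(n+1-p)).choose (2*(n+1-p)+e2))]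
  have key : ∀ p ∈ range (n+1),
      (a+1+(p+1)).choose (2*(p+1)+0) * (b+(n+1-(p+1))).choose (2*(n+1-(p+1))+e2)
      = (a+(p+1)).choose (2*(p+1)+0) * (b+(n+1-(p+1))).choose (2*(n+1-(p+1))+e2)
        + ((a+1)+p).choose (2*p+1) * (b+(n-p)).choose (2*(n-p)+e2) := by
    intro p _
    have h1 : a+1+(p+1) = (a+(p+1))+1 := by ring
    have h2 : 2*(p+1)+0 = (2*p+1)+1 := by ring
    have h3 : n+1-(p+1) = n-p := by omega
    have h4 : a+(p+1) = a+1+p := by ring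
    rw [h1, h2, Nat.choose_succ_succ' (a+(p+1)) (2*p+1), add_mul, h3, h4]
    have h5 : 2*p+1+1 = 2*(p+1)+0 := by ring
    rw [h5, add_comm]
  rw [Finset.sum_congr rfl key, Finset.sum_add_distrib]
  simp only [Nat.mul_zero, Nat.add_zero, Nat.zero_add, Nat.choose_zero_right, Nat.sub_zero, one_mul]
  omega

-- Rb0 via symmetry
lemma Rb0 (a b n e1 : ℕ) :
    Usum a (b+1) (n+1) e1 0 = Usum a b (n+1) e1 0 + Usum a (b+1) n e1 1 := by
  rw [Usymm a (b+1), Ra0, Usymm, Usymm (b+1) a]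

lemma U_n0 (a b e1 e2 : ℕ) : Usum a b 0 e1 e2 = a.choose e1 * b.choose e2 := by
  simp [Usum]

lemma U_a0 (b n e2 : ℕ) : Usum 0 b n 0 e2 = (b+n).choose (2*n+e2) := by
  rw [Usum, Finset.sum_eq_single_of_mem 0 (by simp)]
  · simp
  · intro p _ hp
    rw [Nat.choose_eq_zero_of_lt (by omega), zero_mul]

lemma U_a1 (b n e2 : ℕ) : Usum 1 b n 1 e2 = (b+n).choose (2*n+e2) := by
  rw [Usum, Finset.sum_eq_single_of_mem 0 (by simp)]
  · simp
  · intro p _ hp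
    rw [Nat.choose_eq_zero_of_lt (by omega), zero_mul]

lemma U_b0 (a n e1 : ℕ) : Usum a 0 n e1 0 = (a+n).choose (2*n+e1) := by
  rw [Usum, Finset.sum_eq_single_of_mem n (by simp)]
  · simp
  · intro p hp hpn
    have : p < n := by
      have := Finset.mem_range.mp hp; omega
    rw [Nat.choose_eq_zero_of_lt (show 0 + (n-p) < 2*(n-p)+0 by omega), mul_zero]

lemma U_b0_odd (a n e1 : ℕ) : Usum a 0 n e1 1 = 0 := by
  rw [Usum]
  apply Finset.sum_eq_zero
  intro p _
  rw [Nat.choose_eq_zero_of_lt (show 0 + (n-p) < 2*(n-p)+1 by omega), mul_zero]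

-- key lemma for VK
lemma Ukey (a b n : ℕ) :
    Usum (b+1) (a+1) n 0 1 + Usum a (b+1) n 0 1
      = Usum b (a+1) n 0 1 + Usum (a+1) (b+1) n 0 1 := by
  cases n with
  | zero => simp [U_n0]
  | succ m =>
    have h1 := Ra0 b (a+1) m 1
    have h2 := Ra0 a (b+1) m 1
    have h3 : Usum (b+1) (a+1) m 1 1 = Usum (a+1) (b+1) m 1 1 := Usymm _ _ _ _ _
    omega

lemma VK (a b n : ℕ) :
    Usum (a+1) (b+1) (n+1) 0 0 + Usum (a+1) b n 1 1
      = Usum a b (n+1) 0 0 + Usum (a+2) (b+1) n 1 1 := by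
  have E1 := Ra0 a (b+1) n 0
  have E2 := Rb0 a b n 0
  have E3 := Ra1 (a+1) (b+1) n 1
  rw [show a+1+1 = a+2 from by ring] at E3
  have E4 := Rb1 (a+1) b n 1
  have E5 := Ukey a b n
  -- need flips: Usum (a+1) (b+1) n 1 0 = Usum (b+1) (a+1) n 0 1, etc.
  have F1 : Usum (a+1) (b+1) n 1 0 = Usum (b+1) (a+1) n 0 1 := Usymm _ _ _ _ _
  have F2 : Usum (a+1) b n 1 0 = Usum b (a+1) n 0 1 := Usymm _ _ _ _ _
  omega

lemma Dab_succ (a b n : ℕ) : Dab (a+1) (b+1) n = Dab a b n := by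
  rw [Dab, Dab]
  by_cases hb : b ≤ a+n
  · rw [if_pos hb, if_pos (by omega), show a+1+n-(b+1) = a+n-b from by omega]
  · rw [if_neg hb, if_neg (by omega), show b+1+n-(a+1)-1 = b+n-a-1 from by omega]

lemma Mlem : ∀ a b n : ℕ, Usum a b (n+1) 0 0 = Usum (a+1) b n 1 1 + Dab a b (n+1) := by
  intro a
  induction a with
  | zero =>
    intro b n
    rw [U_a0, U_a1, Dab]
    have hpas := Nat.choose_succ_succ' (b+n) (2*n+1)
    rw [show 2*n+1+1 = 2*n+2 from by ring] at hpas
    simp only [show 2*(n+1)+0 = 2*n+2 from by ring, show 2*(n+1) = 2*n+2 from by ring,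
      show b+(n+1) = b+n+1 from by ring, Nat.add_zero]
    by_cases hb : b ≤ 0 + (n+1)
    · rw [if_pos hb, Nat.choose_eq_zero_of_lt (show 0+(n+1)-b < 2*n+2 by omega)]
      have hz : (b+n).choose (2*n+2) = 0 := Nat.choose_eq_zero_of_lt (by omega)
      omega
    · rw [if_neg hb, show b+n+1-0-1 = b+n from by omega]
      omega
  | succ a ih =>
    intro b n
    cases b with
    | zero =>
      rw [U_b0, U_b0_odd, Dab, if_pos (by omega), show a+1+(n+1)-0 = a+1+(n+1) by omega]
      rw [show 2*(n+1)+0 = 2*(n+1) by ring, zero_add]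
    | succ b =>
      have hVK := VK a b n
      have hIH := ih b n
      have hD := Dab_succ a b (n+1)
      rw [show a+1+1 = a+2 from by ring]
      omega

lemma Udiff : ∀ (n a b : ℕ), Usum a (b+1) n 0 1 = Usum (a+1) b n 0 1 + Dab a b n := by
  intro n a b
  cases n with
  | zero =>
    rw [U_n0, U_n0, Dab]
    split <;> simp [Nat.choose_one_right]
  | succ n =>
    have h1 := Ra0 a b n 1
    have h2 := Rb1 a b (n+1) 0
    have h3 := Mlem a b n
    omega

def ext' {d n : ℕ} (m : Fin d) (g : Fin n → Fin d) : Fin (n+1) → Fin d :=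
  fun a => if h : a.1 < n then g ⟨a.1, h⟩ else m

def emb {d n : ℕ} (m : Fin d) (g : Fin n → Fin m.1) : Fin n → Fin d :=
  fun a => ⟨(g a).1, lt_trans (g a).2 m.2⟩

def extg {d n : ℕ} (m : Fin d) (g : Fin n → Fin m.1) : Fin (n+1) → Fin d := ext' m (emb m g)

lemma ext'_self {d n : ℕ} (f : Fin (n+1) → Fin d) :
    ext' (f (Fin.last n)) (fun a => f a.castSucc) = f := by
  funext x
  simp only [ext']
  split
  · exact congrArg f (Fin.ext rfl)
  · next h =>
    have hx : x = Fin.last n := Fin.ext (by simp only [Fin.val_last]; omega)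
    rw [hx]

lemma ext'_last {d n : ℕ} (m : Fin d) (g : Fin n → Fin d) : ext' m g (Fin.last n) = m := by
  simp [ext']

lemma ext'_castSucc {d n : ℕ} (m : Fin d) (g : Fin n → Fin d) (a : Fin n) :
    ext' m g a.castSucc = g a := by
  simp only [ext']
  split
  · exact congrArg g (Fin.ext rfl)
  · next h => exact absurd (show (a.castSucc).1 < n from a.2) h

open Finset in
open scoped Classical in
lemma stage1 (d n : ℕ) (w : (Fin (n+1) → Fin d) → ℕ) (Q : (Fin (n+1) → Fin d) → Prop) :
    ∑ f ∈ univ.filter (fun f : Fin (n+1) → Fin d =>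
        (∀ a b, a < b → f a < f b) ∧ Q f), w f
    = ∑ m : Fin d, ∑ g ∈ univ.filter (fun g : Fin n → Fin d =>
        (∀ a b, a < b → g a < g b) ∧ (∀ a, g a < m) ∧ Q (ext' m g)), w (ext' m g) := by
  rw [← Finset.sum_fiberwise_of_maps_to (g := fun f => f (Fin.last n))
    (fun f _ => Finset.mem_univ _) w]
  apply Finset.sum_congr rfl
  intro m _
  refine Finset.sum_bij' (i := fun f _ => fun a : Fin n => f a.castSucc)
    (j := fun g _ => ext' m g) ?hi ?hj ?left ?right ?h
  case hi =>
    intro f hf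
    obtain ⟨hf1, hfl⟩ := Finset.mem_filter.mp hf
    obtain ⟨hSM, hQ⟩ := (Finset.mem_filter.mp hf1).2
    rw [Finset.mem_filter]
    refine ⟨Finset.mem_univ _, ?_, ?_, ?_⟩
    · intro a b hab
      exact hSM _ _ (Fin.castSucc_lt_castSucc_iff.mpr hab)
    · intro a
      show f a.castSucc < m
      rw [← hfl]
      exact hSM _ _ (Fin.castSucc_lt_last a)
    · have he := ext'_self f
      rw [hfl] at he
      show Q (ext' m (fun a => f a.castSucc))
      rw [he]
      exact hQ
  case hj =>
    intro g hg
    obtain ⟨hSM, hbd, hQ⟩ := (Finset.mem_filter.mp hg).2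
    rw [Finset.mem_filter, Finset.mem_filter]
    refine ⟨⟨Finset.mem_univ _, ?_, hQ⟩, ext'_last m g⟩
    intro a b hab
    simp only [ext']
    split
    · split
      · apply hSM
        exact Fin.mk_lt_mk.mpr hab
      · apply hbd
    · next h =>
      exfalso
      have ha := a.2
      have hb := b.2
      have hab' : a.1 < b.1 := hab
      omega
  case left =>
    intro f hf
    obtain ⟨hf1, hfl⟩ := Finset.mem_filter.mp hf
    have he := ext'_self f
    rw [hfl] at he
    show ext' m (fun a => f a.castSucc) = f
    rw [he]
  case right =>
    intro g hg
    funext a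
    exact ext'_castSucc m g a
  case h =>
    intro f hf
    obtain ⟨hf1, hfl⟩ := Finset.mem_filter.mp hf
    have he := ext'_self f
    rw [hfl] at he
    show w f = w (ext' m (fun a => f a.castSucc))
    rw [he]

open Finset in
open scoped Classical in
lemma stage2 (d n : ℕ) (m : Fin d) (v : (Fin n → Fin d) → ℕ) (P : (Fin n → Fin d) → Prop) :
    ∑ g ∈ univ.filter (fun g : Fin n → Fin d =>
        (∀ a b, a < b → g a < g b) ∧ (∀ a, g a < m) ∧ P g), v g
    = ∑ g ∈ univ.filter (fun g : Fin n → Fin m.1 =>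
        (∀ a b, a < b → g a < g b) ∧ P (emb m g)), v (emb m g) := by
  refine Finset.sum_bij'
    (i := fun g hg => fun a : Fin n =>
      (⟨(g a).1, (Finset.mem_filter.mp hg).2.2.1 a⟩ : Fin m.1))
    (j := fun g _ => emb m g) ?hi ?hj ?left ?right ?h
  case hi =>
    intro g hg
    obtain ⟨hSM, hbd, hP⟩ := (Finset.mem_filter.mp hg).2
    rw [Finset.mem_filter]
    refine ⟨Finset.mem_univ _, ?_, ?_⟩
    · intro a b hab
      exact hSM a b hab
    · have he : emb m (fun a : Fin n =>
          (⟨(g a).1, (Finset.mem_filter.mp hg).2.2.1 a⟩ : Fin m.1)) = g := by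
        funext a
        exact Fin.ext rfl
      rw [he]
      exact hP
  case hj =>
    intro g hg
    obtain ⟨hSM, hP⟩ := (Finset.mem_filter.mp hg).2
    rw [Finset.mem_filter]
    refine ⟨Finset.mem_univ _, ?_, ?_, hP⟩
    · intro a b hab
      exact hSM a b hab
    · intro a
      exact (g a).2
  case left =>
    intro g hg
    funext a
    exact Fin.ext rfl
  case right =>
    intro g hg
    funext a
    exact Fin.ext rfl
  case h =>
    intro g hg
    have he : emb m (fun a : Fin n =>
        (⟨(g a).1, (Finset.mem_filter.mp hg).2.2.1 a⟩ : Fin m.1)) = g := by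
      funext a
      exact Fin.ext rfl
    rw [he]

open Finset in
open scoped Classical in
lemma SPLIT (d n : ℕ) (w : (Fin (n+1) → Fin d) → ℕ) (Q : (Fin (n+1) → Fin d) → Prop) :
    ∑ f ∈ univ.filter (fun f : Fin (n+1) → Fin d =>
        (∀ a b, a < b → f a < f b) ∧ Q f), w f
    = ∑ m : Fin d, ∑ g ∈ univ.filter (fun g : Fin n → Fin m.1 =>
        (∀ a b, a < b → g a < g b) ∧ Q (extg m g)), w (extg m g) := by
  rw [stage1 d n w Q]
  exact Finset.sum_congr rfl fun m _ =>
    stage2 d n m (fun g => w (ext' m g)) (fun g => Q (ext' m g))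

def wt (k i : ℕ) (f : Fin i → Fin k) : ℕ :=
  ∏ a : Fin i,
      ((if h : a.1 + 1 < i then (f ⟨a.1 + 1, h⟩).1 + 1 else k + 1) - ((f a).1 + 1))

open scoped Classical in
lemma sig_eq_wt (k i j : ℕ) : sig k i j =
    ∑ f ∈ Finset.univ.filter (fun f : Fin i → Fin k =>
      (∀ a b : Fin i, a < b → f a < f b) ∧ ∃ a, (f a).1 + 1 = j), wt k i f := rfl

open scoped Classical in
noncomputable def Lsum (t p : ℕ) : ℕ :=
  ∑ g ∈ Finset.univ.filter (fun g : Fin p → Fin t =>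
      (∀ a b : Fin p, a < b → g a < g b)), wt t p g

lemma extg_val_lt {d n : ℕ} (m : Fin d) (g : Fin n → Fin m.1) (x : Fin (n+1)) (h : x.1 < n) :
    (extg m g x).1 = (g ⟨x.1, h⟩).1 := by
  simp only [extg, ext', emb, dif_pos h]

lemma extg_val_ge {d n : ℕ} (m : Fin d) (g : Fin n → Fin m.1) (x : Fin (n+1)) (h : ¬ x.1 < n) :
    (extg m g x).1 = m.1 := by
  simp only [extg, ext', emb, dif_neg h]

lemma wt_extg (d n : ℕ) (m : Fin d) (g : Fin n → Fin m.1) :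
    wt d (n+1) (extg m g) = wt m.1 n g * (d - m.1) := by
  rw [wt, wt, Fin.prod_univ_castSucc]
  congr 1
  · apply Finset.prod_congr rfl
    intro a _
    have h1 : (a.castSucc).1 = a.1 := rfl
    have h2 : (a.castSucc).1 + 1 < n + 1 := by
      have := a.2; omega
    rw [dif_pos h2]
    have h3 : (extg m g a.castSucc).1 = (g a).1 := by
      rw [extg_val_lt m g a.castSucc (show (a.castSucc).1 < n from a.2)]
      exact congrArg Fin.val (congrArg g (Fin.ext rfl))
    rw [h3]
    by_cases h4 : a.1 + 1 < n
    · rw [dif_pos h4]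
      have h5 : (extg m g ⟨(a.castSucc).1 + 1, h2⟩).1 = (g ⟨a.1+1, h4⟩).1 :=
        extg_val_lt m g _ (by simpa using h4)
      rw [h5]
    · rw [dif_neg h4]
      have h5 : (extg m g ⟨(a.castSucc).1 + 1, h2⟩).1 = m.1 :=
        extg_val_ge m g _ (by simpa using h4)
      rw [h5]
  · have h1 : ¬ ((Fin.last n).1 + 1 < n + 1) := by simp
    rw [dif_neg h1]
    have h2 : (extg m g (Fin.last n)).1 = m.1 := extg_val_ge m g _ (by simp)
    rw [h2]
    omega

lemma extg_last {d n : ℕ} (m : Fin d) (g : Fin n → Fin m.1) : extg m g (Fin.last n) = m :=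
  ext'_last m (emb m g)

lemma fswap {α : Type*} [Fintype α] {p q : α → Prop} (ip : DecidablePred p) (iq : DecidablePred q)
    (h : ∀ x, p x ↔ q x) (w : α → ℕ) :
    ∑ x ∈ @Finset.filter _ p ip Finset.univ, w x = ∑ x ∈ @Finset.filter _ q iq Finset.univ, w x := by
  rw [Finset.sum_filter, Finset.sum_filter]
  apply Finset.sum_congr rfl
  intro x _
  by_cases hx : p x
  · rw [if_pos hx, if_pos ((h x).mp hx)]
  · rw [if_neg hx, if_neg (fun hq => hx ((h x).mpr hq))]

open scoped Classical in
lemma Lsum_rec (t p : ℕ) : Lsum t (p+1) = ∑ m ∈ range t, Lsum m p * (t - m) := by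
  have hs := SPLIT t p (wt t (p+1)) (fun _ => True)
  rw [Lsum]
  refine Eq.trans (fswap _ _ (fun x => by simp) (wt t (p+1))) (hs.trans ?_)
  rw [← Fin.sum_univ_eq_sum_range (fun m => Lsum m p * (t - m)) t]
  apply Finset.sum_congr rfl
  intro m _
  refine Eq.trans (Finset.sum_congr rfl fun g _ => wt_extg t p m g) ?_
  rw [← Finset.sum_mul]
  show (∑ g ∈ _, wt m.1 p g) * (t - m.1) = Lsum m.1 p * (t - m.1)
  congr 1
  rw [Lsum]
  exact (fswap _ _ (fun x => by simp) (wt m.1 p)).symm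

open scoped Classical in
lemma Lsum_zero (t : ℕ) : Lsum t 0 = 1 := by
  rw [Lsum]
  rw [Finset.filter_true_of_mem (fun g _ => by intro a b; exact absurd a.2 (Nat.not_lt_zero a.1))]
  have hw : ∀ g ∈ (Finset.univ : Finset (Fin 0 → Fin t)), wt t 0 g = 1 := by
    intro g _
    rw [wt]
    simp
  rw [Finset.sum_congr rfl hw]
  simp

lemma Lsum_closed (p : ℕ) : ∀ t, Lsum t p = (t+p).choose (2*p) := by
  induction p with
  | zero => intro t; simp [Lsum_zero]
  | succ p ih =>
    intro t
    rw [Lsum_rec]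
    have : ∀ m ∈ range t, Lsum m p * (t - m) = (m+p).choose (2*p) * (t-m) := by
      intro m _; rw [ih m]
    rw [Finset.sum_congr rfl this, idSum p (2*p) (by omega) t]
    congr 1 <;> omega

open scoped Classical in
lemma sig_zero (k j : ℕ) : sig k 0 j = 0 := by
  rw [sig]
  rw [Finset.filter_false_of_mem, Finset.sum_empty]
  rintro f - ⟨-, a, -⟩
  exact a.elim0

open scoped Classical in
lemma inner_top (k i j : ℕ) (m : Fin k) (h1 : m.1 + 1 = j) :
    (∑ g ∈ Finset.univ.filter (fun g : Fin i → Fin m.1 =>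
        (∀ a b : Fin i, a < b → g a < g b) ∧ (∃ a, ((extg m g) a).1 + 1 = j)),
      wt k (i+1) (extg m g))
    = Lsum (j-1) i * (k + 1 - j) := by
  have hm : m.1 = j - 1 := by omega
  have hk : k - m.1 = k + 1 - j := by
    have := m.2; omega
  refine Eq.trans (Finset.sum_congr rfl fun g _ => wt_extg k i m g) ?_
  rw [← Finset.sum_mul, hk, ← hm, Lsum]
  congr 1
  refine fswap _ _ (fun g => ?_) _
  constructor
  · exact fun h => h.1
  · intro hSM
    refine ⟨hSM, ⟨Fin.last i, ?_⟩⟩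
    rw [extg_last]
    exact h1

open scoped Classical in
lemma inner_mid (k i j : ℕ) (m : Fin k) (h1 : m.1 + 1 ≠ j) (h2 : j ≤ m.1) :
    (∑ g ∈ Finset.univ.filter (fun g : Fin i → Fin m.1 =>
        (∀ a b : Fin i, a < b → g a < g b) ∧ (∃ a, ((extg m g) a).1 + 1 = j)),
      wt k (i+1) (extg m g))
    = sig m.1 i j * (k - m.1) := by
  refine Eq.trans (Finset.sum_congr rfl fun g _ => wt_extg k i m g) ?_
  rw [← Finset.sum_mul, sig_eq_wt]
  congr 1
  refine fswap _ _ (fun g => ?_) _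
  constructor
  · rintro ⟨hSM, a, ha⟩
    refine ⟨hSM, ?_⟩
    by_cases hai : a.1 < i
    · refine ⟨⟨a.1, hai⟩, ?_⟩
      rw [← extg_val_lt m g a hai]
      exact ha
    · exfalso
      rw [extg_val_ge m g a hai] at ha
      omega
  · rintro ⟨hSM, a, ha⟩
    refine ⟨hSM, ⟨a.castSucc, ?_⟩⟩
    rw [extg_val_lt m g a.castSucc (show (a.castSucc).1 < i from a.2)]
    rw [show (⟨(a.castSucc).1, a.2⟩ : Fin i) = a from Fin.ext rfl]
    exact ha

open scoped Classical in
lemma inner_bot (k i j : ℕ) (m : Fin k) (h1 : m.1 + 1 ≠ j) (h2 : ¬ j ≤ m.1) :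
    (∑ g ∈ Finset.univ.filter (fun g : Fin i → Fin m.1 =>
        (∀ a b : Fin i, a < b → g a < g b) ∧ (∃ a, ((extg m g) a).1 + 1 = j)),
      wt k (i+1) (extg m g))
    = 0 := by
  apply Finset.sum_eq_zero
  intro g hg
  exfalso
  obtain ⟨hSM, a, ha⟩ := (Finset.mem_filter.mp hg).2
  by_cases hai : a.1 < i
  · rw [extg_val_lt m g a hai] at ha
    have := (g ⟨a.1, hai⟩).2
    omega
  · rw [extg_val_ge m g a hai] at ha
    omega

set_option maxHeartbeats 1000000 in
open scoped Classical in
lemma sig_rec (k i j : ℕ) (hj1 : 1 ≤ j) (hjk : j ≤ k) :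
    sig k (i+1) j = Lsum (j-1) i * (k + 1 - j) + ∑ m ∈ Ico j k, sig m i j * (k - m) := by
  have hs := SPLIT k i (wt k (i+1)) (fun f => ∃ a, (f a).1 + 1 = j)
  rw [sig_eq_wt]
  refine Eq.trans (fswap _ _ (fun x => Iff.rfl) (wt k (i+1))) (hs.trans ?_)
  have step2 : ∀ m : Fin k,
      (∑ g ∈ Finset.univ.filter (fun g : Fin i → Fin m.1 =>
        (∀ a b : Fin i, a < b → g a < g b) ∧ (∃ a, ((extg m g) a).1 + 1 = j)),
      wt k (i+1) (extg m g))
      = (fun mv => if mv + 1 = j then Lsum (j-1) i * (k + 1 - j)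
          else if j ≤ mv then sig mv i j * (k - mv) else 0) m.1 := by
    intro m
    show _ = if m.1 + 1 = j then Lsum (j-1) i * (k + 1 - j)
        else if j ≤ m.1 then sig m.1 i j * (k - m.1) else 0
    by_cases h1 : m.1 + 1 = j
    · rw [if_pos h1]
      exact inner_top k i j m h1
    · rw [if_neg h1]
      by_cases h2 : j ≤ m.1
      · rw [if_pos h2]
        exact inner_mid k i j m h1 h2
      · rw [if_neg h2]
        exact inner_bot k i j m h1 h2
  refine Eq.trans (Finset.sum_congr rfl (fun m _ =>
    Eq.trans (fswap _ _ (fun g => Iff.rfl) (fun g => wt k (i+1) (extg m g))) (step2 m))) ?_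
  clear step2 hs
  rw [Fin.sum_univ_eq_sum_range (fun mv => if mv + 1 = j then Lsum (j-1) i * (k + 1 - j)
      else if j ≤ mv then sig mv i j * (k - mv) else 0) k]
  rw [Finset.range_eq_Ico, ← Finset.sum_Ico_consecutive _ (Nat.zero_le j) hjk]
  congr 1
  · refine Eq.trans (Finset.sum_eq_single_of_mem (j-1)
        (Finset.mem_Ico.mpr ⟨Nat.zero_le _, by omega⟩) ?_) ?_
    · intro b hb hbne
      have hb2 : b < j := (Finset.mem_Ico.mp hb).2
      rw [if_neg (by omega), if_neg (by omega)]
    · rw [if_pos (by omega)]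
  · apply Finset.sum_congr rfl
    intro m hm
    obtain ⟨hm1, hm2⟩ := Finset.mem_Ico.mp hm
    rw [if_neg (by omega), if_pos hm1]

lemma sig_closed (j : ℕ) (hj1 : 1 ≤ j) :
    ∀ n k, j ≤ k → sig k (n+1) j = Usum (j-1) (k-j+1) n 0 1 := by
  intro n
  induction n with
  | zero =>
    intro k hjk
    rw [sig_rec k 0 j hj1 hjk, Lsum_zero, U_n0]
    have hz : ∀ m ∈ Ico j k, sig m 0 j * (k - m) = 0 := by
      intro m _
      rw [sig_zero, zero_mul]
    rw [Finset.sum_congr rfl hz]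
    simp [Nat.choose_one_right]
    omega
  | succ n ih =>
    intro k hjk
    rw [sig_rec k (n+1) j hj1 hjk, Lsum_closed]
    have e1 : ∀ m ∈ Ico j k, sig m (n+1) j * (k - m)
        = ∑ c ∈ range (n+1), (j-1+c).choose (2*c)
            * ((m-j+1+(n-c)).choose (2*(n-c)+1) * (k - m)) := by
      intro m hm
      obtain ⟨hm1, _⟩ := Finset.mem_Ico.mp hm
      rw [ih m hm1, Usum, Finset.sum_mul]
      apply Finset.sum_congr rfl
      intro c _
      ring
    rw [Finset.sum_congr rfl e1, Finset.sum_comm]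
    have e2 : ∀ c ∈ range (n+1),
        (∑ m ∈ Ico j k, (j-1+c).choose (2*c)
            * ((m-j+1+(n-c)).choose (2*(n-c)+1) * (k - m)))
        = (j-1+c).choose (2*c) * ((k-j+1)+(n+1-c)).choose (2*(n+1-c)+1) := by
      intro c hc
      have hcn : c ≤ n := Nat.lt_succ_iff.mp (Finset.mem_range.mp hc)
      rw [← Finset.mul_sum]
      congr 1
      rw [Finset.sum_Ico_eq_sum_range]
      have e3 : ∀ x ∈ range (k-j), (j+x-j+1+(n-c)).choose (2*(n-c)+1) * (k - (j+x))
          = (x+(n-c+1)).choose (2*(n-c)+1) * ((k-j) - x) := by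
        intro x hx
        rw [show j+x-j+1+(n-c) = x+(n-c+1) from by omega,
          show k-(j+x) = (k-j)-x from by omega]
      rw [Finset.sum_congr rfl e3, idSum (n-c+1) (2*(n-c)+1) (by omega) (k-j)]
      rw [show (k-j)+(n-c+1)+1 = (k-j+1)+(n+1-c) from by omega,
        show 2*(n-c)+1+2 = 2*(n+1-c)+1 from by omega]
    rw [Finset.sum_congr rfl e2, Usum]
    conv_rhs => rw [Finset.sum_range_succ]
    have e4 : (∑ c ∈ range (n+1),
        (j-1+c).choose (2*c) * ((k-j+1)+(n+1-c)).choose (2*(n+1-c)+1))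
        = ∑ c ∈ range (n+1),
        (j-1+c).choose (2*c+0) * ((k-j+1)+(n+1-c)).choose (2*(n+1-c)+1) := by
      apply Finset.sum_congr rfl
      intro c _
      norm_num
    have e5 : (j-1+(n+1)).choose (2*(n+1)+0) * ((k-j+1)+(n+1-(n+1))).choose (2*(n+1-(n+1))+1)
        = (j-1+(n+1)).choose (2*(n+1)) * (k+1-j) := by
      rw [Nat.sub_self]
      norm_num [Nat.choose_one_right]
      left
      omega
    rw [e4, e5]
    omega

lemma descProd (M : ℕ) : ∀ T : ℕ, ∏ r ∈ range T, ((M:ℤ) - r) = (M.descFactorial T : ℤ) := by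
  intro T
  induction T with
  | zero => simp
  | succ T ih =>
    rw [Finset.prod_range_succ, ih, Nat.descFactorial_succ]
    by_cases h : T ≤ M
    · push_cast [h]
      ring
    · have h1 : M.descFactorial T = 0 := Nat.descFactorial_eq_zero_iff_lt.mpr (by omega)
      rw [h1]
      simp

lemma Icc_image (n : ℕ) : Finset.Icc (-(n:ℤ)) ((n:ℤ)-1)
    = (Finset.range (2*n)).image (fun r : ℕ => (n:ℤ)-1-r) := by
  ext s
  simp only [Finset.mem_Icc, Finset.mem_image, Finset.mem_range]
  constructor
  · rintro ⟨h1, h2⟩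
    refine ⟨((n:ℤ)-1-s).toNat, by omega, by omega⟩
  · rintro ⟨r, hr, rfl⟩
    omega

lemma prodIcc (n : ℕ) (x : ℤ) :
    ∏ s ∈ Finset.Icc (-(n:ℤ)) ((n:ℤ)-1), (x + s)
      = ∏ r ∈ range (2*n), (x + ((n:ℤ)-1-r)) := by
  rw [Icc_image, Finset.prod_image]
  intro r hr r' hr' h
  have h' : (n:ℤ)-1-r = (n:ℤ)-1-r' := h
  omega

lemma prodIccA (n : ℕ) (x : ℤ) (h : 0 ≤ x + n - 1) :
    ∏ s ∈ Finset.Icc (-(n:ℤ)) ((n:ℤ)-1), (x + s)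
      = ((x + n - 1).toNat.descFactorial (2*n) : ℤ) := by
  rw [prodIcc]
  have e1 : ∀ r ∈ range (2*n), (x + ((n:ℤ)-1-r)) = (((x+n-1).toNat : ℤ) - r) := by
    intro r _
    omega
  rw [Finset.prod_congr rfl e1, descProd]

lemma prodIccB (n : ℕ) (x : ℤ) (h : x + n - 1 < 0) :
    ∏ s ∈ Finset.Icc (-(n:ℤ)) ((n:ℤ)-1), (x + s)
      = (((n:ℤ) - x).toNat.descFactorial (2*n) : ℤ) := by
  rw [prodIcc, ← Finset.prod_range_reflect]
  have e1 : ∀ r ∈ range (2*n), (x + ((n:ℤ)-1-((2*n-1-r : ℕ) : ℤ)))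
      = (-1) * ((((n:ℤ) - x).toNat : ℤ) - r) := by
    intro r hr
    have hr2 : r < 2*n := Finset.mem_range.mp hr
    have : ((2*n-1-r : ℕ) : ℤ) = 2*(n:ℤ)-1-r := by omega
    rw [this]
    omega
  rw [Finset.prod_congr rfl e1, Finset.prod_mul_distrib, descProd, Finset.prod_const]
  rw [Finset.card_range, pow_mul]
  norm_num

lemma Dab_prod (k n j : ℕ) (hj1 : 1 ≤ j) (hjk : j < k) :
    ∏ s ∈ Finset.Icc (-(n:ℤ)) ((n:ℤ)-1), (2*(j:ℤ) - (k:ℤ) + s)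
      = (((2*n).factorial * Dab (j-1) (k-j) n : ℕ) : ℤ) := by
  rw [Dab]
  by_cases hc : k - j ≤ j - 1 + n
  · rw [if_pos hc]
    have h0 : (0:ℤ) ≤ (2*(j:ℤ) - (k:ℤ)) + n - 1 := by omega
    rw [prodIccA n _ h0]
    have e : ((2*(j:ℤ) - (k:ℤ)) + n - 1).toNat = j - 1 + n - (k - j) := by omega
    rw [e, Nat.descFactorial_eq_factorial_mul_choose]
  · rw [if_neg hc]
    have h0 : (2*(j:ℤ) - (k:ℤ)) + n - 1 < 0 := by omega
    rw [prodIccB n _ h0]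
    have e : ((n:ℤ) - (2*(j:ℤ) - (k:ℤ))).toNat = k - j + n - (j-1) - 1 := by omega
    rw [e, Nat.descFactorial_eq_factorial_mul_choose]

/-- for `1 ≤ i ≤ k` and `1 ≤ j < k`,
`σ_{i,j}^{(k)} - σ_{i,j+1}^{(k)} = (1/(2i-2)!) ∏_{s=1-i}^{i-2} (2j-k+s)`
(empty product `= 1` for `i = 1`); in particular `σ_{i,j}^{(k)} ≥ σ_{i,j+1}^{(k)}`,
with equality iff `⌊(k-i+3)/2⌋ ≤ j < ⌊(k+i+1)/2⌋`. -/
theorem sig_difference (k i j : ℕ) (hi : 1 ≤ i) (hik : i ≤ k) (hj : 1 ≤ j) (hjk : j < k) :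
    ((sig k i j : ℚ) - (sig k i (j + 1) : ℚ)
        = (1 / (Nat.factorial (2 * i - 2) : ℚ))
            * ∏ s ∈ Finset.Icc ((1 : ℤ) - (i : ℤ)) ((i : ℤ) - 2),
                ((2 * (j : ℤ) - (k : ℤ) + s : ℤ) : ℚ)) ∧
    sig k i (j + 1) ≤ sig k i j ∧
    (sig k i j = sig k i (j + 1) ↔ ((k - i + 3) / 2 ≤ j ∧ j < (k + i + 1) / 2)) := by
  obtain ⟨n, rfl⟩ : ∃ n, i = n + 1 := ⟨i - 1, by omega⟩
  have hc1 : sig k (n+1) j = Usum (j-1) (k-j+1) n 0 1 := sig_closed j hj n k (by omega)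
  have hc2 : sig k (n+1) (j+1) = Usum ((j+1)-1) (k-(j+1)+1) n 0 1 :=
    sig_closed (j+1) (by omega) n k (by omega)
  rw [show (j+1)-1 = j from by omega, show k-(j+1)+1 = k-j from by omega] at hc2
  have hU := Udiff n (j-1) (k-j)
  rw [show (j-1)+1 = j from by omega] at hU
  have key : sig k (n+1) j = sig k (n+1) (j+1) + Dab (j-1) (k-j) n := by
    rw [hc1, hc2, hU]
  refine ⟨?_, by omega, ?_⟩
  · have hp := Dab_prod k n j hj hjk
    have hIcc : Finset.Icc ((1:ℤ) - (((n:ℕ)+1 : ℕ) : ℤ)) ((((n:ℕ)+1 : ℕ) : ℤ) - 2)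
        = Finset.Icc (-(n:ℤ)) ((n:ℤ)-1) := by
      congr 1 <;> push_cast <;> ring
    rw [hIcc, show 2*(n+1) - 2 = 2*n from by omega]
    have hprodQ : (∏ s ∈ Finset.Icc (-(n:ℤ)) ((n:ℤ)-1), ((2*(j:ℤ) - (k:ℤ) + s : ℤ) : ℚ))
        = (((2*n).factorial * Dab (j-1) (k-j) n : ℕ) : ℚ) := by
      rw [← Int.cast_prod, hp]
      push_cast
      ring
    rw [hprodQ, key]
    have hf : ((2*n).factorial : ℚ) ≠ 0 :=
      Nat.cast_ne_zero.mpr (Nat.factorial_ne_zero _)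
    push_cast
    field_simp
    ring
  · have hD : Dab (j-1) (k-j) n = 0 ↔ ((k - (n+1) + 3)/2 ≤ j ∧ j < (k + (n+1) + 1)/2) := by
      rw [Dab]
      split_ifs with hcond <;> rw [Nat.choose_eq_zero_iff] <;> omega
    omega
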